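/- Let m ≥ 5 be an integer and let χ : E(K_m) → Z_3 be an edge-coloring such that for every vertex v, at most two colors appear on the edges incident to v, and one of the colors appearing at v appears on at most one edge incident to v (i.e., no vertex is incident to two distinct colors each appearing at least twice). Then either there is a color a ∈ Z_3 such that the edges of the other two colors form a matching in K_m, or K_m contains a monochromatic complete subgraph on m−1 vertices. -/
import Mathlib


open Finset

-- auxiliary decidable facts about `ZMod 3`
lemma zmod3_total : ∀ x c : ZMod 3, x = c ∨ x = c + 1 ∨ x = c + 2 := by decide
lemma zmod3_four' : ∀ A B C D : ZMod 3,
    A = B ∨ A = C ∨ A = D ∨ B = C ∨ B = D ∨ C = D := by decide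

lemma zmod3_case1 : ∀ x c : ZMod 3, x ≠ c → x ≠ c + 2 → x = c + 1 := by
  intro x c h1 h2
  rcases zmod3_total x c with h | h | h
  · exact absurd h h1
  · exact h
  · exact absurd h h2

lemma zmod3_case2 : ∀ x c : ZMod 3, x ≠ c → x ≠ c + 1 → x = c + 2 := by
  intro x c h1 h2
  rcases zmod3_total x c with h | h | h
  · exact absurd h h1
  · exact absurd h h2
  · exact h

lemma zmod3_ne12 : ∀ c : ZMod 3, c + 1 ≠ c + 2 := by decide

lemma zmod3_four : ∀ A B C D : ZMod 3, A ≠ B → A ≠ C → A ≠ D → B ≠ C → B ≠ D →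
    C ≠ D → False := by
  intro A B C D h1 h2 h3 h4 h5 h6
  rcases zmod3_four' A B C D with h | h | h | h | h | h
  exacts [h1 h, h2 h, h3 h, h4 h, h5 h, h6 h]

/-- If at most one edge at `v` misses color `a`, and the edge to `u1` misses it,
then the edge to `u2` has color `a`. -/
lemma aux_L1 {m : ℕ} (χ : Sym2 (Fin m) → ZMod 3) {v : Fin m} {a : ZMod 3}
    (hP : ∀ u u' : Fin m, u ≠ v → u' ≠ v → χ s(v, u) ≠ a → χ s(v, u') ≠ a → u = u')
    {u1 u2 : Fin m} (h1 : u1 ≠ v) (h2 : u2 ≠ v) (h12 : u1 ≠ u2)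
    (hc : χ s(v, u1) ≠ a) : χ s(v, u2) = a := by
  by_contra hc2
  exact h12 (hP u1 u2 h1 h2 hc hc2)

/-- No two majority classes of size ≥ 2 (uses a fifth vertex `p`). -/
lemma aux_A1 {m : ℕ} (χ : Sym2 (Fin m) → ZMod 3) (x y z w p : Fin m)
    (hxy : x ≠ y) (hxz : x ≠ z) (hxw : x ≠ w) (hxp : x ≠ p)
    (hyz : y ≠ z) (hyw : y ≠ w) (hyp : y ≠ p)
    (hzw : z ≠ w) (hzp : z ≠ p) (hwp : w ≠ p)
    (A B : ZMod 3) (hAB : A ≠ B)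
    (hx : ∀ u u' : Fin m, u ≠ x → u' ≠ x → χ s(x, u) ≠ A → χ s(x, u') ≠ A → u = u')
    (hy : ∀ u u' : Fin m, u ≠ y → u' ≠ y → χ s(y, u) ≠ A → χ s(y, u') ≠ A → u = u')
    (hz : ∀ u u' : Fin m, u ≠ z → u' ≠ z → χ s(z, u) ≠ B → χ s(z, u') ≠ B → u = u')
    (hw : ∀ u u' : Fin m, u ≠ w → u' ≠ w → χ s(w, u) ≠ B → χ s(w, u') ≠ B → u = u')
    (hp : ¬ ∃ a b : ZMod 3, a ≠ b ∧
        (∃ u u' : Fin m, u ≠ p ∧ u' ≠ p ∧ u ≠ u' ∧ χ s(p, u) = a ∧ χ s(p, u') = a) ∧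
        (∃ u u' : Fin m, u ≠ p ∧ u' ≠ p ∧ u ≠ u' ∧ χ s(p, u) = b ∧ χ s(p, u') = b)) :
    False := by
  by_cases hc1 : χ s(x, z) = A
  · -- z's exceptional edge is at x
    have hzx : χ s(z, x) ≠ B := by rw [Sym2.eq_swap]; rw [hc1]; exact hAB
    have hzy : χ s(z, y) = B := aux_L1 χ hz hxz hyz hxy hzx
    have hzp2 : χ s(z, p) = B := aux_L1 χ hz hxz hzp.symm hxp hzx
    -- y's exceptional edge is at z
    have hyz2 : χ s(y, z) ≠ A := by
      rw [Sym2.eq_swap]; rw [hzy]; exact hAB.symm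
    have hyw2 : χ s(y, w) = A := aux_L1 χ hy hyz.symm hyw.symm hzw hyz2
    have hyp2 : χ s(y, p) = A := aux_L1 χ hy hyz.symm hyp.symm hzp hyz2
    -- w's exceptional edge is at y
    have hwy : χ s(w, y) ≠ B := by rw [Sym2.eq_swap]; rw [hyw2]; exact hAB
    have hwp2 : χ s(w, p) = B := aux_L1 χ hw hyw hwp.symm hyp hwy
    -- case on x's edge to p
    by_cases hxp2 : χ s(x, p) = A
    · exact hp ⟨A, B, hAB,
        ⟨x, y, hxp, hyp, hxy, by rw [Sym2.eq_swap]; exact hxp2,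
          by rw [Sym2.eq_swap]; exact hyp2⟩,
        ⟨z, w, hzp, hwp, hzw, by rw [Sym2.eq_swap]; exact hzp2,
          by rw [Sym2.eq_swap]; exact hwp2⟩⟩
    · have hxw2 : χ s(x, w) = A := aux_L1 χ hx hxp.symm hxw.symm (Ne.symm hwp) hxp2
      have hwx : χ s(w, x) ≠ B := by rw [Sym2.eq_swap]; rw [hxw2]; exact hAB
      exact hxy (hw x y hxw hyw hwx hwy)
  · -- x's exceptional edge is at z
    have hxw2 : χ s(x, w) = A := aux_L1 χ hx hxz.symm hxw.symm hzw hc1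
    have hxp2 : χ s(x, p) = A := aux_L1 χ hx hxz.symm hxp.symm hzp hc1
    -- w's exceptional edge is at x
    have hwx : χ s(w, x) ≠ B := by rw [Sym2.eq_swap]; rw [hxw2]; exact hAB
    have hwy : χ s(w, y) = B := aux_L1 χ hw hxw hyw hxy hwx
    have hwp2 : χ s(w, p) = B := aux_L1 χ hw hxw hwp.symm hxp hwx
    -- y's exceptional edge is at w
    have hyw2 : χ s(y, w) ≠ A := by
      rw [Sym2.eq_swap]; rw [hwy]; exact hAB.symm
    have hyz2 : χ s(y, z) = A := aux_L1 χ hy hyw.symm hyz.symm hzw.symm hyw2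
    have hyp2 : χ s(y, p) = A := aux_L1 χ hy hyw.symm hyp.symm hwp hyw2
    -- z's exceptional edge is at y
    have hzy : χ s(z, y) ≠ B := by rw [Sym2.eq_swap]; rw [hyz2]; exact hAB
    have hzp2 : χ s(z, p) = B := aux_L1 χ hz hyz hzp.symm hyp hzy
    exact hp ⟨A, B, hAB,
      ⟨x, y, hxp, hyp, hxy, by rw [Sym2.eq_swap]; exact hxp2,
        by rw [Sym2.eq_swap]; exact hyp2⟩,
      ⟨z, w, hzp, hwp, hzw, by rw [Sym2.eq_swap]; exact hzp2,
        by rw [Sym2.eq_swap]; exact hwp2⟩⟩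

/-- No pattern with one class of size ≥ 3 and two further deviant vertices. -/
lemma aux_A2 {m : ℕ} (χ : Sym2 (Fin m) → ZMod 3) (x1 x2 x3 v1 v2 : Fin m)
    (h12 : x1 ≠ x2) (h13 : x1 ≠ x3) (h23 : x2 ≠ x3)
    (h1v1 : x1 ≠ v1) (h2v1 : x2 ≠ v1) (h3v1 : x3 ≠ v1)
    (h1v2 : x1 ≠ v2) (h2v2 : x2 ≠ v2) (h3v2 : x3 ≠ v2) (hv : v1 ≠ v2)
    (a b c : ZMod 3) (hba : b ≠ a) (hca : c ≠ a)
    (hx1 : ∀ u u' : Fin m, u ≠ x1 → u' ≠ x1 → χ s(x1, u) ≠ a → χ s(x1, u') ≠ a → u = u')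
    (hx2 : ∀ u u' : Fin m, u ≠ x2 → u' ≠ x2 → χ s(x2, u) ≠ a → χ s(x2, u') ≠ a → u = u')
    (hx3 : ∀ u u' : Fin m, u ≠ x3 → u' ≠ x3 → χ s(x3, u) ≠ a → χ s(x3, u') ≠ a → u = u')
    (hv1 : ∀ u u' : Fin m, u ≠ v1 → u' ≠ v1 → χ s(v1, u) ≠ b → χ s(v1, u') ≠ b → u = u')
    (hv2 : ∀ u u' : Fin m, u ≠ v2 → u' ≠ v2 → χ s(v2, u) ≠ c → χ s(v2, u') ≠ c → u = u') :
    False := by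
  -- helper: if some xi sees b at v1 and c at v2, contradiction
  have common : ∀ xi : Fin m,
      (∀ u u' : Fin m, u ≠ xi → u' ≠ xi → χ s(xi, u) ≠ a → χ s(xi, u') ≠ a → u = u') →
      xi ≠ v1 → xi ≠ v2 → χ s(v1, xi) = b → χ s(v2, xi) = c → False := by
    intro xi hxi hiv1 hiv2 hcb hcc
    have e1 : χ s(xi, v1) ≠ a := by rw [Sym2.eq_swap]; rw [hcb]; exact hba
    have e2 : χ s(xi, v2) ≠ a := by rw [Sym2.eq_swap]; rw [hcc]; exact hca
    exact hv (hxi v1 v2 hiv1.symm hiv2.symm e1 e2)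
  by_cases e11 : χ s(v1, x1) = b
  · by_cases e21 : χ s(v2, x1) = c
    · exact common x1 hx1 h1v1 h1v2 e11 e21
    · have e22 : χ s(v2, x2) = c := aux_L1 χ hv2 h1v2 h2v2 h12 e21
      have e23 : χ s(v2, x3) = c := aux_L1 χ hv2 h1v2 h3v2 h13 e21
      by_cases e12 : χ s(v1, x2) = b
      · exact common x2 hx2 h2v1 h2v2 e12 e22
      · have e13 : χ s(v1, x3) = b := aux_L1 χ hv1 h2v1 h3v1 h23 e12
        exact common x3 hx3 h3v1 h3v2 e13 e23
  · have e12 : χ s(v1, x2) = b := aux_L1 χ hv1 h1v1 h2v1 h12 e11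
    have e13 : χ s(v1, x3) = b := aux_L1 χ hv1 h1v1 h3v1 h13 e11
    by_cases e22 : χ s(v2, x2) = c
    · exact common x2 hx2 h2v1 h2v2 e12 e22
    · have e23 : χ s(v2, x3) = c := aux_L1 χ hv2 h2v2 h3v2 h23 e22
      exact common x3 hx3 h3v1 h3v2 e13 e23

theorem stmt2 (m : ℕ) (hm : 5 ≤ m) (χ : Sym2 (Fin m) → ZMod 3)
    (hlocal : ∀ v : Fin m,
      -- at most two colors appear on the edges incident to `v`
      (∃ a : ZMod 3, ∀ u : Fin m, u ≠ v → χ s(v, u) ≠ a) ∧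
      -- no two distinct colors each appear at least twice at `v`
      ¬ ∃ a b : ZMod 3, a ≠ b ∧
        (∃ u u' : Fin m, u ≠ v ∧ u' ≠ v ∧ u ≠ u' ∧ χ s(v, u) = a ∧ χ s(v, u') = a) ∧
        (∃ u u' : Fin m, u ≠ v ∧ u' ≠ v ∧ u ≠ u' ∧ χ s(v, u) = b ∧ χ s(v, u') = b)) :
    -- either the edges of the two colors other than some `a` form a matching …
    (∃ a : ZMod 3, ∀ u v w : Fin m, v ≠ u → w ≠ u →
        χ s(u, v) ≠ a → χ s(u, w) ≠ a → v = w) ∨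
    -- … or there is a monochromatic complete subgraph on `m - 1` vertices
    (∃ (S : Finset (Fin m)) (a : ZMod 3), S.card = m - 1 ∧
        ∀ u ∈ S, ∀ v ∈ S, u ≠ v → χ s(u, v) = a) := by
  -- every vertex has a majority color: at most one incident edge avoids it
  have hPex : ∀ v : Fin m, ∃ a : ZMod 3,
      ∀ u u' : Fin m, u ≠ v → u' ≠ v → χ s(v, u) ≠ a → χ s(v, u') ≠ a → u = u' := by
    intro v
    obtain ⟨⟨c0, hc0⟩, hno2⟩ := hlocal v
    by_cases h1 : ∃ u u' : Fin m, u ≠ v ∧ u' ≠ v ∧ u ≠ u' ∧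
        χ s(v, u) = c0 + 1 ∧ χ s(v, u') = c0 + 1
    · by_cases h2 : ∃ u u' : Fin m, u ≠ v ∧ u' ≠ v ∧ u ≠ u' ∧
          χ s(v, u) = c0 + 2 ∧ χ s(v, u') = c0 + 2
      · exact absurd ⟨c0 + 1, c0 + 2, zmod3_ne12 c0, h1, h2⟩ hno2
      · refine ⟨c0 + 1, ?_⟩
        intro u u' hu hu' hcu hcu'
        by_contra hne
        exact h2 ⟨u, u', hu, hu', hne,
          zmod3_case2 _ _ (hc0 u hu) hcu, zmod3_case2 _ _ (hc0 u' hu') hcu'⟩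
    · refine ⟨c0 + 2, ?_⟩
      intro u u' hu hu' hcu hcu'
      by_contra hne
      exact h1 ⟨u, u', hu, hu', hne,
        zmod3_case1 _ _ (hc0 u hu) hcu, zmod3_case1 _ _ (hc0 u' hu') hcu'⟩
  choose maj hmaj using hPex
  by_cases hall : ∀ v w : Fin m, maj v = maj w
  · -- all majorities equal: the non-majority edges form a matching
    left
    have h0 : (0 : ℕ) < m := by omega
    refine ⟨maj ⟨0, h0⟩, ?_⟩
    intro u v w hv hw h1 h2
    rw [← hall u ⟨0, h0⟩] at h1 h2
    exact hmaj u v w hv hw h1 h2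
  · push_neg at hall
    right
    -- claim1: any two classes of size ≥ 2 have the same color
    have claim1 : ∀ x y z t : Fin m, x ≠ y → z ≠ t → maj x = maj y → maj z = maj t →
        maj x = maj z := by
      intro x y z t hxy hzt hexy hezt
      by_contra hne
      have hxz : x ≠ z := fun h => hne (by rw [h])
      have hxt : x ≠ t := fun h => hne ((congrArg maj h).trans hezt.symm)
      have hyz : y ≠ z := fun h => hne (hexy.trans (congrArg maj h))
      have hyt : y ≠ t := fun h => hne ((hexy.trans (congrArg maj h)).trans hezt.symm)
      -- get a fifth vertex
      obtain ⟨p, hp⟩ : ∃ p : Fin m, p ∉ ({x, y, z, t} : Finset (Fin m)) := by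
        by_contra hcon
        push_neg at hcon
        have hsub : (univ : Finset (Fin m)) ⊆ {x, y, z, t} := fun q _ => hcon q
        have h4 : ({x, y, z, t} : Finset (Fin m)).card ≤ 4 := by
          apply le_trans (Finset.card_insert_le _ _)
          have := Finset.card_insert_le y ({z, t} : Finset (Fin m))
          have := Finset.card_insert_le z ({t} : Finset (Fin m))
          simp only [Finset.card_singleton] at *
          omega
        have := Finset.card_le_card hsub
        rw [Finset.card_univ, Fintype.card_fin] at this
        omega
      simp only [Finset.mem_insert, Finset.mem_singleton, not_or] at hp
      obtain ⟨hpx, hpy, hpz, hpt⟩ := hp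
      have hy' : ∀ u u' : Fin m, u ≠ y → u' ≠ y →
          χ s(y, u) ≠ maj x → χ s(y, u') ≠ maj x → u = u' := by
        rw [hexy]; exact hmaj y
      have ht' : ∀ u u' : Fin m, u ≠ t → u' ≠ t →
          χ s(t, u) ≠ maj z → χ s(t, u') ≠ maj z → u = u' := by
        rw [hezt]; exact hmaj t
      exact aux_A1 χ x y z t p hxy hxz hxt (Ne.symm hpx) hyz hyt (Ne.symm hpy)
        hzt (Ne.symm hpz) (Ne.symm hpt) (maj x) (maj z) hne
        (hmaj x) hy' (hmaj z) ht' (hlocal p).2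
    -- pigeonhole: some two distinct vertices share a majority color
    have h0 : (0 : ℕ) < m := by omega
    have h1 : (1 : ℕ) < m := by omega
    have h2 : (2 : ℕ) < m := by omega
    have h3 : (3 : ℕ) < m := by omega
    set p0 : Fin m := ⟨0, h0⟩
    set p1 : Fin m := ⟨1, h1⟩
    set p2 : Fin m := ⟨2, h2⟩
    set p3 : Fin m := ⟨3, h3⟩
    have hp01 : p0 ≠ p1 := by simp [p0, p1, Fin.ext_iff]
    have hp02 : p0 ≠ p2 := by simp [p0, p2, Fin.ext_iff]
    have hp03 : p0 ≠ p3 := by simp [p0, p3, Fin.ext_iff]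
    have hp12 : p1 ≠ p2 := by simp [p1, p2, Fin.ext_iff]
    have hp13 : p1 ≠ p3 := by simp [p1, p3, Fin.ext_iff]
    have hp23 : p2 ≠ p3 := by simp [p2, p3, Fin.ext_iff]
    obtain ⟨x0, y0, hxy0, he0⟩ : ∃ x0 y0 : Fin m, x0 ≠ y0 ∧ maj x0 = maj y0 := by
      by_contra hcon
      push_neg at hcon
      exact zmod3_four (maj p0) (maj p1) (maj p2) (maj p3)
        (hcon p0 p1 hp01) (hcon p0 p2 hp02) (hcon p0 p3 hp03)
        (hcon p1 p2 hp12) (hcon p1 p3 hp13) (hcon p2 p3 hp23)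
    set a := maj x0 with ha
    -- claim2: at most one vertex deviates from color a
    have claim2 : ∀ z, maj z ≠ a → ∀ z', maj z' ≠ a → z = z' := by
      intro z hz z' hz'
      by_contra hne
      have hzz' : maj z ≠ maj z' := fun h => hz (claim1 z z' x0 y0 hne hxy0 h he0)
      -- every other vertex has majority a
      have hall3 : ∀ u : Fin m, u ≠ z → u ≠ z' → maj u = a := by
        intro u hu hu'
        by_contra huc
        have huz : maj u ≠ maj z := fun h => huc (claim1 u z x0 y0 hu hxy0 h he0)
        have huz' : maj u ≠ maj z' := fun h => huc (claim1 u z' x0 y0 hu' hxy0 h he0)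
        exact zmod3_four a (maj u) (maj z) (maj z')
          (Ne.symm huc) (Ne.symm hz) (Ne.symm hz') huz huz' hzz'
      -- three vertices avoiding z, z'
      have hcard : 2 < ((univ : Finset (Fin m)) \ {z, z'}).card := by
        have hsub : ({z, z'} : Finset (Fin m)) ⊆ univ := Finset.subset_univ _
        rw [Finset.card_sdiff_of_subset hsub, Finset.card_univ, Fintype.card_fin]
        have : ({z, z'} : Finset (Fin m)).card ≤ 2 := by
          apply le_trans (Finset.card_insert_le _ _); simp
        omega
      rw [Finset.two_lt_card] at hcard
      obtain ⟨x1, hx1m, x2, hx2m, x3, hx3m, h12, h13, h23⟩ := hcard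
      simp only [Finset.mem_sdiff, Finset.mem_univ, Finset.mem_insert,
        Finset.mem_singleton, true_and, not_or] at hx1m hx2m hx3m
      have e1 : maj x1 = a := hall3 x1 hx1m.1 hx1m.2
      have e2 : maj x2 = a := hall3 x2 hx2m.1 hx2m.2
      have e3 : maj x3 = a := hall3 x3 hx3m.1 hx3m.2
      exact aux_A2 χ x1 x2 x3 z z' h12 h13 h23
        hx1m.1 hx2m.1 hx3m.1 hx1m.2 hx2m.2 hx3m.2 hne
        a (maj z) (maj z') hz hz'
        (e1 ▸ hmaj x1) (e2 ▸ hmaj x2) (e3 ▸ hmaj x3) (hmaj z) (hmaj z')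
    -- get the unique deviant vertex vs
    obtain ⟨v0, w0, hvw⟩ := hall
    obtain ⟨vs, hvs⟩ : ∃ vs : Fin m, maj vs ≠ a := by
      by_cases hv0 : maj v0 = a
      · exact ⟨w0, fun hh => hvw (hv0.trans hh.symm)⟩
      · exact ⟨v0, hv0⟩
    have hrest : ∀ x : Fin m, x ≠ vs → maj x = a := by
      intro x hx
      by_contra hc
      exact hx (claim2 x hc vs hvs)
    -- the complement of vs is a monochromatic clique of color a
    refine ⟨univ.erase vs, a, ?_, ?_⟩
    · rw [Finset.card_erase_of_mem (Finset.mem_univ _), Finset.card_univ, Fintype.card_fin]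
    · have key : ∀ p q : Fin m, p ≠ vs → q ≠ vs → p ≠ q →
          χ s(vs, p) = maj vs → χ s(p, q) = a := by
        intro p q hp hq hpq hcol
        have hpa : ∀ u u' : Fin m, u ≠ p → u' ≠ p →
            χ s(p, u) ≠ a → χ s(p, u') ≠ a → u = u' := by
          rw [← hrest p hp]; exact hmaj p
        have h1 : χ s(p, vs) ≠ a := by
          rw [Sym2.eq_swap]; rw [hcol]; exact hvs
        by_contra h2
        exact hq (hpa vs q (Ne.symm hp) (Ne.symm hpq) h1 h2).symm
      intro u hu w hw huw
      rw [Finset.mem_erase] at hu hw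
      by_cases hcu : χ s(vs, u) = maj vs
      · exact key u w hu.1 hw.1 huw hcu
      · have hcw : χ s(vs, w) = maj vs := aux_L1 χ (hmaj vs) hu.1 hw.1 huw hcu
        have := key w u hw.1 hu.1 (Ne.symm huw) hcw
        rw [Sym2.eq_swap]; exact this
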